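/- The set of extreme points (vertices) of the matching polytope is precisely the set of indicator vectors of perfect matchings: with E a finite set and σ₀, σ₁ permutations of E, a point θ of the polytope {θ : E → ℝ | θ ≥ 0 and every σ₀-cycle sum and every σ₁-cycle sum of θ equals 1} is an extreme point of this polytope if and only if θ is the indicator vector of a perfect matching. -/

import Mathlib

open Finset

variable {E : Type*}

/-- A perfect matching of `(E, σ₀, σ₁)`: a `{0,1}`-valued function on `E` such that every
cycle (orbit) of `σ₀` and every cycle of `σ₁` contains exactly one element with value `1`. -/
def IsPerfectMatching (σ₀ σ₁ : Equiv.Perm E) (m : E → ℝ) : Prop :=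
  (∀ e, m e = 0 ∨ m e = 1) ∧
  (∀ e, ∃! e', σ₀.SameCycle e e' ∧ m e' = 1) ∧
  (∀ e, ∃! e', σ₁.SameCycle e e' ∧ m e' = 1)

/-- The matching polytope: nonnegative functions `θ : E → ℝ` whose sum over every
cycle of `σ₀` and over every cycle of `σ₁` equals `1`. -/
def matchingPolytope [Fintype E] [DecidableEq E] (σ₀ σ₁ : Equiv.Perm E) : Set (E → ℝ) :=
  {θ | (∀ e, 0 ≤ θ e) ∧
    (∀ e : E, ∑ e' ∈ univ.filter (fun e' => σ₀.SameCycle e e'), θ e' = 1) ∧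
    (∀ e : E, ∑ e' ∈ univ.filter (fun e' => σ₁.SameCycle e e'), θ e' = 1)}

section Aux
set_option linter.unusedSectionVars false
variable [Fintype E] [DecidableEq E]

/-- The cycle of `e` under `σ` as a finset. -/
def cyc (σ : Equiv.Perm E) (e : E) : Finset E := univ.filter (fun e' => σ.SameCycle e e')

lemma mem_cyc {σ : Equiv.Perm E} {e e' : E} : e' ∈ cyc σ e ↔ σ.SameCycle e e' := by
  simp [cyc]

lemma self_mem_cyc (σ : Equiv.Perm E) (e : E) : e ∈ cyc σ e :=
  mem_cyc.2 (Equiv.Perm.SameCycle.refl σ e)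

lemma cyc_eq_of_mem {σ : Equiv.Perm E} {e e' : E} (h : e' ∈ cyc σ e) : cyc σ e = cyc σ e' := by
  rw [mem_cyc] at h
  ext x; simp only [mem_cyc]
  exact ⟨fun hx => h.symm.trans hx, fun hx => h.trans hx⟩

lemma exists_unique_one_of_sum_eq_one {s : Finset E} {θ : E → ℝ}
    (h01 : ∀ e ∈ s, θ e = 0 ∨ θ e = 1) (hs : ∑ e ∈ s, θ e = 1) :
    ∃! e, e ∈ s ∧ θ e = 1 := by
  have hex : ∃ e, e ∈ s ∧ θ e = 1 := by
    by_contra h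
    push_neg at h
    have : ∑ e ∈ s, θ e = 0 := Finset.sum_eq_zero (fun e he => (h01 e he).resolve_right (h e he))
    rw [this] at hs; norm_num at hs
  obtain ⟨a, ha, ha1⟩ := hex
  refine ⟨a, ⟨ha, ha1⟩, ?_⟩
  rintro b ⟨hb, hb1⟩
  by_contra hne
  have hsub : ({a, b} : Finset E) ⊆ s := by
    intro x hx; simp only [mem_insert, mem_singleton] at hx
    rcases hx with rfl | rfl <;> assumption
  have h2 : (2:ℝ) ≤ ∑ e ∈ s, θ e := by
    have := Finset.sum_le_sum_of_subset_of_nonneg (f := θ) hsub (fun i hi _ => by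
      rcases h01 i hi with h | h <;> rw [h] <;> norm_num)
    rw [Finset.sum_pair (Ne.symm hne), ha1, hb1] at this
    linarith
  rw [hs] at h2; norm_num at h2

lemma le_one_of_mem_polytope {σ₀ σ₁ : Equiv.Perm E} {θ : E → ℝ}
    (hθ : θ ∈ matchingPolytope σ₀ σ₁) (e : E) : θ e ≤ 1 := by
  obtain ⟨hpos, hc0, _⟩ := hθ
  have := Finset.single_le_sum (f := θ) (fun i _ => hpos i) (self_mem_cyc σ₀ e)
  calc θ e ≤ ∑ e' ∈ cyc σ₀ e, θ e' := this
    _ = 1 := hc0 e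


/-- Extending a function on a subtype by zero, summation formula. -/
lemma sum_eq_attach {F s : Finset E} {g : E → ℝ} (hg : ∀ e, e ∉ F → g e = 0) :
    ∑ e ∈ s, g e = ∑ x ∈ F.attach, if (x : E) ∈ s then g x else 0 := by
  rw [Finset.sum_attach F (fun x => if x ∈ s then g x else 0), ← Finset.sum_filter,
    Finset.filter_mem_eq_inter, Finset.inter_comm, ← Finset.filter_mem_eq_inter]
  exact (Finset.sum_filter_of_ne (fun x _ hx => by
    by_contra h; exact hx (hg x h))).symm

/-- The linear map sending `d : ↥F → ℝ` to its sums over the members of a family of finsets. -/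
def cycSumMap (F : Finset E) (C : Finset (Finset E)) : (↥F → ℝ) →ₗ[ℝ] (↥C → ℝ) where
  toFun d := fun c => ∑ x ∈ F.attach, if (x : E) ∈ (c : Finset E) then d x else 0
  map_add' d d' := by
    funext c
    simp only [Pi.add_apply]
    rw [← Finset.sum_add_distrib]
    refine Finset.sum_congr rfl (fun x _ => ?_)
    by_cases h : (x : E) ∈ (c : Finset E) <;> simp [h]
  map_smul' r d := by
    funext c
    dsimp only [RingHom.id_apply, Pi.smul_apply, smul_eq_mul]
    rw [Finset.mul_sum]
    refine Finset.sum_congr rfl (fun x _ => ?_)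
    by_cases h : (x : E) ∈ (c : Finset E) <;> simp [h]

/-- In a fractional cycle there are at least two fractional elements. -/
lemma exists_other_frac {σ : Equiv.Perm E} {θ : E → ℝ} (hpos : ∀ e, 0 ≤ θ e)
    (hc : ∀ e, ∑ e' ∈ cyc σ e, θ e' = 1) {e : E} (h0 : θ e ≠ 0) (h1 : θ e ≠ 1) :
    ∃ e', e' ∈ cyc σ e ∧ e' ≠ e ∧ θ e' ≠ 0 ∧ θ e' ≠ 1 := by
  by_contra hcon
  push_neg at hcon
  -- all other elements of the cycle are 0/1
  have h01 : ∀ e' ∈ (cyc σ e).erase e, θ e' = 0 ∨ θ e' = 1 := by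
    intro e' he'
    rw [Finset.mem_erase] at he'
    by_contra h
    push_neg at h
    exact h.2 (hcon e' he'.2 he'.1 h.1)
  have hsplit : θ e + ∑ e' ∈ (cyc σ e).erase e, θ e' = 1 := by
    have h := hc e
    rw [← Finset.add_sum_erase _ θ (self_mem_cyc σ e)] at h
    exact h
  have hnat : ∑ e' ∈ (cyc σ e).erase e, θ e' =
      (((cyc σ e).erase e).filter (fun e' => θ e' = 1)).card := by
    rw [← Finset.sum_boole]
    refine Finset.sum_congr rfl (fun e' he' => ?_)
    rcases h01 e' he' with h | h <;> simp [h]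
  have hle : θ e ≤ 1 := by
    have := Finset.single_le_sum (f := θ) (fun i _ => hpos i) (self_mem_cyc σ e)
    rw [hc e] at this; exact this
  have hgt : 0 < θ e := lt_of_le_of_ne (hpos e) (Ne.symm h0)
  have hlt : θ e < 1 := lt_of_le_of_ne hle h1
  rw [hnat] at hsplit
  set n := (((cyc σ e).erase e).filter (fun e' => θ e' = 1)).card with hn
  rcases Nat.eq_zero_or_pos n with h | h
  · rw [h] at hsplit; simp at hsplit; exact h1 hsplit
  · have : (1 : ℝ) ≤ (n : ℝ) := by exact_mod_cast h
    linarith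

/-- Key lemma: if `θ` has a fractional coordinate, then there is a nonzero perturbation
direction supported on the fractional coordinates with all cycle sums zero. -/
lemma exists_perturbation {σ₀ σ₁ : Equiv.Perm E} {θ : E → ℝ}
    (hθ : θ ∈ matchingPolytope σ₀ σ₁) (hfrac : ∃ e, θ e ≠ 0 ∧ θ e ≠ 1) :
    ∃ D : E → ℝ, D ≠ 0 ∧ (∀ e, ¬(θ e ≠ 0 ∧ θ e ≠ 1) → D e = 0) ∧
      (∀ e, ∑ e' ∈ cyc σ₀ e, D e' = 0) ∧ (∀ e, ∑ e' ∈ cyc σ₁ e, D e' = 0) := by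
  obtain ⟨hpos, hc0, hc1⟩ := hθ
  set F : Finset E := Finset.univ.filter (fun e => θ e ≠ 0 ∧ θ e ≠ 1) with hFdef
  have hmemF : ∀ e, e ∈ F ↔ (θ e ≠ 0 ∧ θ e ≠ 1) := by
    intro e; simp [hFdef]
  have hFne : F.Nonempty := by
    obtain ⟨e, he⟩ := hfrac; exact ⟨e, (hmemF e).2 he⟩
  set C₀ : Finset (Finset E) := F.image (cyc σ₀) with hC0def
  set C₁ : Finset (Finset E) := F.image (cyc σ₁) with hC1def
  set L : (↥F → ℝ) →ₗ[ℝ] ((↥C₀ → ℝ) × (↥C₁ → ℝ)) :=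
    LinearMap.prod (cycSumMap F C₀) (cycSumMap F C₁) with hLdef
  -- the unique cycle containing an element
  have huniq0 : ∀ (x : E), x ∈ F → ∀ c ∈ C₀, x ∈ c → c = cyc σ₀ x := by
    intro x hx c hc hxc
    obtain ⟨a, _, rfl⟩ := Finset.mem_image.1 hc
    exact cyc_eq_of_mem hxc
  have huniq1 : ∀ (x : E), x ∈ F → ∀ c ∈ C₁, x ∈ c → c = cyc σ₁ x := by
    intro x hx c hc hxc
    obtain ⟨a, _, rfl⟩ := Finset.mem_image.1 hc
    exact cyc_eq_of_mem hxc
  -- L is not injective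
  have hnotinj : ¬ Function.Injective L := by
    intro hinj
    -- the functional (a, b) ↦ ∑ a - ∑ b
    set f : ((↥C₀ → ℝ) × (↥C₁ → ℝ)) →ₗ[ℝ] ℝ :=
      { toFun := fun p => (∑ c, p.1 c) - (∑ c, p.2 c)
        map_add' := by intro p q; simp [Finset.sum_add_distrib]; ring
        map_smul' := by
          intro r p; simp only [RingHom.id_apply, smul_eq_mul, Prod.smul_fst, Prod.smul_snd,
            Pi.smul_apply, Finset.mul_sum]
          rw [mul_sub, Finset.mul_sum, Finset.mul_sum] } with hfdef
    have hfL : ∀ d, f (L d) = 0 := by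
      intro d
      have key : ∀ (C : Finset (Finset E))
          (huniq : ∀ (x : E), x ∈ F → ∀ c ∈ C, x ∈ c → c = cyc σ₀ x)
          , True := fun _ _ => trivial
      have h0 : ∑ c : ↥C₀, (cycSumMap F C₀) d c = ∑ x ∈ F.attach, d x := by
        show ∑ c ∈ C₀.attach, ∑ x ∈ F.attach, (if (x:E) ∈ (c:Finset E) then d x else 0) = _
        rw [Finset.sum_comm]
        refine Finset.sum_congr rfl (fun x _ => ?_)
        have hcx : cyc σ₀ (x:E) ∈ C₀ := Finset.mem_image_of_mem _ x.2
        rw [Finset.sum_eq_single_of_mem (⟨cyc σ₀ (x:E), hcx⟩ : ↥C₀) (Finset.mem_attach _ _)]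
        · rw [if_pos (self_mem_cyc σ₀ (x:E))]
        · intro c _ hne
          rw [if_neg]
          intro hxc
          exact hne (Subtype.ext (huniq0 x x.2 c c.2 hxc))
      have h1 : ∑ c : ↥C₁, (cycSumMap F C₁) d c = ∑ x ∈ F.attach, d x := by
        show ∑ c ∈ C₁.attach, ∑ x ∈ F.attach, (if (x:E) ∈ (c:Finset E) then d x else 0) = _
        rw [Finset.sum_comm]
        refine Finset.sum_congr rfl (fun x _ => ?_)
        have hcx : cyc σ₁ (x:E) ∈ C₁ := Finset.mem_image_of_mem _ x.2
        rw [Finset.sum_eq_single_of_mem (⟨cyc σ₁ (x:E), hcx⟩ : ↥C₁) (Finset.mem_attach _ _)]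
        · rw [if_pos (self_mem_cyc σ₁ (x:E))]
        · intro c _ hne
          rw [if_neg]
          intro hxc
          exact hne (Subtype.ext (huniq1 x x.2 c c.2 hxc))
      show (∑ c, (L d).1 c) - (∑ c, (L d).2 c) = 0
      have : (L d).1 = (cycSumMap F C₀) d := rfl
      rw [this]
      have : (L d).2 = (cycSumMap F C₁) d := rfl
      rw [this, h0, h1, sub_self]
    -- f is surjective
    have hC0ne : C₀.Nonempty := hFne.image _
    have hfsurj : Function.Surjective f := by
      intro r
      obtain ⟨c₀, hc₀⟩ := hC0ne
      refine ⟨(Pi.single (⟨c₀, hc₀⟩ : ↥C₀) r, 0), ?_⟩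
      show (∑ c, Pi.single (⟨c₀, hc₀⟩ : ↥C₀) r c) - (∑ c : ↥C₁, (0:ℝ)) = r
      rw [Finset.sum_pi_single']
      simp
    -- dimension count upper bound
    have hrange : ∀ d, L d ∈ LinearMap.ker f := fun d => LinearMap.mem_ker.2 (hfL d)
    set L' := L.codRestrict (LinearMap.ker f) hrange with hL'def
    have hL'inj : Function.Injective L' := by
      intro a b hab
      apply hinj
      have := congrArg (Subtype.val) hab
      exact this
    have hdim1 : Module.finrank ℝ (↥F → ℝ) ≤ Module.finrank ℝ (LinearMap.ker f) :=
      LinearMap.finrank_le_finrank_of_injective hL'inj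
    have hrankf : Module.finrank ℝ (LinearMap.range f) = 1 := by
      rw [LinearMap.range_eq_top.2 hfsurj]
      simp
    have hdims : Module.finrank ℝ ((↥C₀ → ℝ) × (↥C₁ → ℝ)) = C₀.card + C₁.card := by
      rw [Module.finrank_prod, Module.finrank_fintype_fun_eq_card,
        Module.finrank_fintype_fun_eq_card, Fintype.card_coe, Fintype.card_coe]
    have hrn := LinearMap.finrank_range_add_finrank_ker f
    rw [hrankf, hdims] at hrn
    rw [Module.finrank_fintype_fun_eq_card, Fintype.card_coe] at hdim1
    -- so F.card ≤ C₀.card + C₁.card - 1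
    -- counting lower bound: 2 * C₀.card ≤ F.card and 2 * C₁.card ≤ F.card
    have hcount : ∀ (σ : Equiv.Perm E), (∀ e, ∑ e' ∈ cyc σ e, θ e' = 1) →
        2 * (F.image (cyc σ)).card ≤ F.card := by
      intro σ hc
      have hfib : F.card = ∑ c ∈ F.image (cyc σ), (F.filter (fun e => cyc σ e = c)).card :=
        Finset.card_eq_sum_card_fiberwise (fun x hx => Finset.mem_image_of_mem _ hx)
      have h2 : ∀ c ∈ F.image (cyc σ), 2 ≤ (F.filter (fun e => cyc σ e = c)).card := by
        intro c hc'
        obtain ⟨a, ha, rfl⟩ := Finset.mem_image.1 hc'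
        have hafrac := (hmemF a).1 ha
        obtain ⟨e', he'mem, he'ne, he'0, he'1⟩ :=
          exists_other_frac hpos hc hafrac.1 hafrac.2
        have he'F : e' ∈ F := (hmemF e').2 ⟨he'0, he'1⟩
        have haf : a ∈ F.filter (fun e => cyc σ e = cyc σ a) :=
          Finset.mem_filter.2 ⟨ha, rfl⟩
        have he'f : e' ∈ F.filter (fun e => cyc σ e = cyc σ a) :=
          Finset.mem_filter.2 ⟨he'F, (cyc_eq_of_mem he'mem).symm⟩
        have : 1 < (F.filter (fun e => cyc σ e = cyc σ a)).card :=
          Finset.one_lt_card.2 ⟨a, haf, e', he'f, fun h => he'ne h.symm⟩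
        omega
      calc 2 * (F.image (cyc σ)).card = ∑ _c ∈ F.image (cyc σ), 2 := by
            rw [Finset.sum_const, smul_eq_mul, mul_comm]
        _ ≤ ∑ c ∈ F.image (cyc σ), (F.filter (fun e => cyc σ e = c)).card :=
            Finset.sum_le_sum h2
        _ = F.card := hfib.symm
    have hb0 : 2 * C₀.card ≤ F.card := hcount σ₀ hc0
    have hb1 : 2 * C₁.card ≤ F.card := hcount σ₁ hc1
    have hC0pos : 0 < C₀.card := Finset.card_pos.2 hC0ne
    omega
  -- extract a nonzero kernel element
  rw [← LinearMap.ker_eq_bot] at hnotinj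
  obtain ⟨d, hdker, hdne⟩ := Submodule.exists_mem_ne_zero_of_ne_bot hnotinj
  have hLd : L d = 0 := LinearMap.mem_ker.1 hdker
  refine ⟨fun e => if h : e ∈ F then d ⟨e, h⟩ else 0, ?_, ?_, ?_, ?_⟩
  · intro hD
    apply hdne
    funext x
    have := congrFun hD (x : E)
    simpa [x.2] using this
  · intro e he
    exact dif_neg (fun heF => he ((hmemF e).1 heF))
  · intro e
    rw [sum_eq_attach (F := F) (fun e' he' => dif_neg he')]
    by_cases hmem : cyc σ₀ e ∈ C₀
    · have h0 := congrFun (congrArg Prod.fst hLd) ⟨cyc σ₀ e, hmem⟩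
      have key : (∑ x ∈ F.attach, if (x:E) ∈ cyc σ₀ e then (if h : (x:E) ∈ F then d ⟨x, h⟩ else 0) else 0)
          = ∑ x ∈ F.attach, if (x:E) ∈ cyc σ₀ e then d x else 0 := by
        refine Finset.sum_congr rfl (fun x _ => ?_)
        by_cases hx : (x:E) ∈ cyc σ₀ e
        · rw [if_pos hx, if_pos hx, dif_pos x.2]
        · rw [if_neg hx, if_neg hx]
      exact key.trans h0
    · refine Finset.sum_eq_zero (fun x _ => ?_)
      rw [if_neg]
      intro hx
      exact hmem (by rw [cyc_eq_of_mem hx]; exact Finset.mem_image_of_mem _ x.2)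
  · intro e
    rw [sum_eq_attach (F := F) (fun e' he' => dif_neg he')]
    by_cases hmem : cyc σ₁ e ∈ C₁
    · have h0 := congrFun (congrArg Prod.snd hLd) ⟨cyc σ₁ e, hmem⟩
      have key : (∑ x ∈ F.attach, if (x:E) ∈ cyc σ₁ e then (if h : (x:E) ∈ F then d ⟨x, h⟩ else 0) else 0)
          = ∑ x ∈ F.attach, if (x:E) ∈ cyc σ₁ e then d x else 0 := by
        refine Finset.sum_congr rfl (fun x _ => ?_)
        by_cases hx : (x:E) ∈ cyc σ₁ e
        · rw [if_pos hx, if_pos hx, dif_pos x.2]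
        · rw [if_neg hx, if_neg hx]
      exact key.trans h0
    · refine Finset.sum_eq_zero (fun x _ => ?_)
      rw [if_neg]
      intro hx
      exact hmem (by rw [cyc_eq_of_mem hx]; exact Finset.mem_image_of_mem _ x.2)


end Aux

/-- A point of the matching polytope is an extreme point of the matching polytope
if and only if it is the indicator vector of a perfect matching. -/
theorem extremePoint_matchingPolytope_iff_perfectMatching
    [Fintype E] [DecidableEq E] (σ₀ σ₁ : Equiv.Perm E)
    (θ : E → ℝ) (hθ : θ ∈ matchingPolytope σ₀ σ₁) :
    θ ∈ Set.extremePoints ℝ (matchingPolytope σ₀ σ₁) ↔ IsPerfectMatching σ₀ σ₁ θ := by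
  constructor
  · intro hext
    have h01 : ∀ e, θ e = 0 ∨ θ e = 1 := by
      by_contra h
      push_neg at h
      obtain ⟨e, he0, he1⟩ := h
      obtain ⟨D, hDne, hDsupp, hD0, hD1⟩ := exists_perturbation hθ ⟨e, he0, he1⟩
      set F := Finset.univ.filter (fun e => θ e ≠ 0 ∧ θ e ≠ 1) with hF
      have hFne : F.Nonempty := ⟨e, by simp [hF, he0, he1]⟩
      set ε := F.inf' hFne (fun e => θ e / (|D e| + 1)) with hε
      have hεpos : 0 < ε := by
        rw [hε, Finset.lt_inf'_iff]
        intro i hi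
        rw [hF, Finset.mem_filter] at hi
        have : 0 < θ i := lt_of_le_of_ne (hθ.1 i) (Ne.symm hi.2.1)
        positivity
      have hbound : ∀ e, ε * |D e| ≤ θ e ∨ D e = 0 := by
        intro e
        by_cases heF : e ∈ F
        · left
          have h1 : ε ≤ θ e / (|D e| + 1) := Finset.inf'_le _ heF
          have h2 : 0 < θ e := lt_of_le_of_ne (hθ.1 e) (Ne.symm ((Finset.mem_filter.1 heF).2.1))
          have h3 : (0:ℝ) ≤ |D e| := abs_nonneg _
          calc ε * |D e| ≤ (θ e / (|D e| + 1)) * |D e| :=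
                mul_le_mul_of_nonneg_right h1 h3
            _ ≤ θ e := by
                rw [div_mul_eq_mul_div, div_le_iff₀ (by linarith)]
                nlinarith
        · right
          apply hDsupp
          intro hcon
          exact heF (Finset.mem_filter.2 ⟨Finset.mem_univ e, hcon⟩)
      have hmem : ∀ (s : ℝ), |s| ≤ ε → (fun e => θ e + s * D e) ∈ matchingPolytope σ₀ σ₁ := by
        intro s hs
        refine ⟨?_, ?_, ?_⟩
        · intro e
          rcases hbound e with h | h
          · have h4 : |s * D e| ≤ ε * |D e| := by
              rw [abs_mul]; exact mul_le_mul_of_nonneg_right hs (abs_nonneg _)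
            have h5 := abs_le.1 (h4.trans h)
            simp only
            linarith [h5.1]
          · simp only [h, mul_zero, add_zero]
            exact hθ.1 e
        · intro e
          show ∑ e' ∈ cyc σ₀ e, (θ e' + s * D e') = 1
          rw [Finset.sum_add_distrib, ← Finset.mul_sum, hD0 e, mul_zero, add_zero]
          exact hθ.2.1 e
        · intro e
          show ∑ e' ∈ cyc σ₁ e, (θ e' + s * D e') = 1
          rw [Finset.sum_add_distrib, ← Finset.mul_sum, hD1 e, mul_zero, add_zero]
          exact hθ.2.2 e
      have hx := hmem ε (le_of_eq (abs_of_pos hεpos))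
      have hy := hmem (-ε) (le_of_eq (by rw [abs_neg, abs_of_pos hεpos]))
      have hseg : θ ∈ openSegment ℝ (fun e => θ e + ε * D e) (fun e => θ e + (-ε) * D e) := by
        refine ⟨1/2, 1/2, by norm_num, by norm_num, by norm_num, ?_⟩
        funext e
        simp only [Pi.add_apply, Pi.smul_apply, smul_eq_mul]
        ring
      obtain ⟨-, hkey⟩ := mem_extremePoints.1 hext
      obtain ⟨hxeq, -⟩ := hkey _ hx _ hy hseg
      apply hDne
      funext e
      have h6 : θ e + ε * D e = θ e := congrFun hxeq e
      have h7 : ε * D e = 0 := by linarith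
      rcases mul_eq_zero.1 h7 with h | h
      · exact absurd h hεpos.ne'
      · exact h
    refine ⟨h01, fun e => ?_, fun e => ?_⟩
    · obtain ⟨a, ⟨haS, ha1⟩, hu⟩ :=
        exists_unique_one_of_sum_eq_one (s := cyc σ₀ e) (fun e' _ => h01 e') (hθ.2.1 e)
      exact ⟨a, ⟨mem_cyc.1 haS, ha1⟩, fun y hy => hu y ⟨mem_cyc.2 hy.1, hy.2⟩⟩
    · obtain ⟨a, ⟨haS, ha1⟩, hu⟩ :=
        exists_unique_one_of_sum_eq_one (s := cyc σ₁ e) (fun e' _ => h01 e') (hθ.2.2 e)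
      exact ⟨a, ⟨mem_cyc.1 haS, ha1⟩, fun y hy => hu y ⟨mem_cyc.2 hy.1, hy.2⟩⟩
  · intro hm
    refine ⟨hθ, fun x hx y hy hseg => ?_⟩
    obtain ⟨a, b, ha, hb, hab, hsum⟩ := hseg
    have hzero : ∀ e, θ e = 0 → x e = 0 ∧ y e = 0 := by
      intro e he
      have h := congrFun hsum e
      simp only [Pi.add_apply, Pi.smul_apply, smul_eq_mul] at h
      rw [he] at h
      have hx0 := hx.1 e
      have hy0 := hy.1 e
      have h1 : a * x e = 0 := by nlinarith
      have h2 : b * y e = 0 := by nlinarith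
      constructor
      · rcases mul_eq_zero.1 h1 with h' | h'
        · exact absurd h' ha.ne'
        · exact h'
      · rcases mul_eq_zero.1 h2 with h' | h'
        · exact absurd h' hb.ne'
        · exact h'
    have key : ∀ z : E → ℝ, z ∈ matchingPolytope σ₀ σ₁ → (∀ e, θ e = 0 → z e = 0) → z = θ := by
      intro z hz hz0
      funext e
      rcases hm.1 e with h | h
      · rw [h]; exact hz0 e h
      · rw [h]
        obtain ⟨c, ⟨hcS, hc1⟩, hu⟩ := hm.2.1 e
        have hce : e = c := hu e ⟨Equiv.Perm.SameCycle.refl σ₀ e, h⟩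
        have hz_other : ∀ e' ∈ cyc σ₀ e, e' ≠ e → z e' = 0 := by
          intro e' he' hne
          apply hz0
          rcases hm.1 e' with h' | h'
          · exact h'
          · exact absurd ((hu e' ⟨mem_cyc.1 he', h'⟩).trans hce.symm) hne
        have hsum1 : ∑ e' ∈ cyc σ₀ e, z e' = 1 := hz.2.1 e
        rw [Finset.sum_eq_single_of_mem e (self_mem_cyc σ₀ e) hz_other] at hsum1
        exact hsum1
    exact key x hx (fun e he => (hzero e he).1)
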